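/- For any tree T on n vertices, |γ_o(T) − γ_a(T)| ≤ n/2, where γ_a(T) and γ_o(T) are the global defensive and global offensive alliance numbers. -/

import Mathlib

open SimpleGraph Finset
open scoped Classical

/-- The closed neighborhood `N[v]` of a vertex `v`. -/
noncomputable def closedNbhd {V : Type*} [Fintype V] (G : SimpleGraph V) (v : V) : Finset V :=
  insert v (Finset.univ.filter (fun u => G.Adj v u))

/-- `S` is a dominating set: every vertex outside `S` has a neighbor in `S`. -/
def Dominating {V : Type*} [Fintype V] (G : SimpleGraph V) (S : Finset V) : Prop :=
  ∀ v, v ∉ S → ∃ u ∈ S, G.Adj v u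

/-- `S` is a global defensive alliance. -/
def GlobalDefensiveAlliance {V : Type*} [Fintype V] (G : SimpleGraph V) (S : Finset V) : Prop :=
  Dominating G S ∧ ∀ v ∈ S, (closedNbhd G v \ S).card ≤ (closedNbhd G v ∩ S).card

/-- `S` is a global offensive alliance. -/
def GlobalOffensiveAlliance {V : Type*} [Fintype V] (G : SimpleGraph V) (S : Finset V) : Prop :=
  Dominating G S ∧ ∀ v, v ∉ S → (∃ u ∈ S, G.Adj v u) →
    (closedNbhd G v \ S).card ≤ (closedNbhd G v ∩ S).card

/-- Edges with both endpoints in `S`. -/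
noncomputable def edgesInside {V : Type*} [Fintype V] (G : SimpleGraph V) (S : Finset V) :
    Finset (Sym2 V) :=
  G.edgeFinset.filter (fun e => ∀ x ∈ e, x ∈ S)

/-- Edges with both endpoints outside `S`. -/
noncomputable def edgesOutside {V : Type*} [Fintype V] (G : SimpleGraph V) (S : Finset V) :
    Finset (Sym2 V) :=
  G.edgeFinset.filter (fun e => ∀ x ∈ e, x ∉ S)

/-- Edges with exactly one endpoint in `S`. -/
noncomputable def edgesBetween {V : Type*} [Fintype V] (G : SimpleGraph V) (S : Finset V) :
    Finset (Sym2 V) :=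
  G.edgeFinset.filter (fun e => (∃ x ∈ e, x ∈ S) ∧ (∃ x ∈ e, x ∉ S))

/-- The global defensive alliance number `γ_a(G)`. -/
noncomputable def gammaA {V : Type*} [Fintype V] (G : SimpleGraph V) : ℕ :=
  sInf {k | ∃ S : Finset V, GlobalDefensiveAlliance G S ∧ S.card = k}

/-- The global offensive alliance number `γ_o(G)`. -/
noncomputable def gammaO {V : Type*} [Fintype V] (G : SimpleGraph V) : ℕ :=
  sInf {k | ∃ S : Finset V, GlobalOffensiveAlliance G S ∧ S.card = k}

section Aux

variable {V : Type*} [Fintype V] (G : SimpleGraph V)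

/-- open neighborhood as a finset -/
noncomputable def nbh (v : V) : Finset V := Finset.univ.filter (fun u => G.Adj v u)

variable {G}

lemma mem_nbh {u v : V} : u ∈ nbh G v ↔ G.Adj v u := by simp [nbh]

lemma not_mem_nbh_self {v : V} : v ∉ nbh G v := by simp [nbh]

lemma closedNbhd_eq (v : V) : closedNbhd G v = insert v (nbh G v) := rfl

lemma cn_diff_mem {S : Finset V} {v : V} (h : v ∈ S) :
    closedNbhd G v \ S = nbh G v \ S := by
  rw [closedNbhd_eq, Finset.insert_sdiff_of_mem _ h]

lemma cn_inter_mem {S : Finset V} {v : V} (h : v ∈ S) :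
    (closedNbhd G v ∩ S).card = (nbh G v ∩ S).card + 1 := by
  rw [closedNbhd_eq, Finset.insert_inter_of_mem h,
    Finset.card_insert_of_notMem (fun hc => not_mem_nbh_self (Finset.mem_inter.1 hc).1)]

lemma cn_diff_not_mem {S : Finset V} {v : V} (h : v ∉ S) :
    (closedNbhd G v \ S).card = (nbh G v \ S).card + 1 := by
  rw [closedNbhd_eq, Finset.insert_sdiff_of_notMem _ h,
    Finset.card_insert_of_notMem (fun hc => not_mem_nbh_self (Finset.mem_sdiff.1 hc).1)]

lemma cn_inter_not_mem {S : Finset V} {v : V} (h : v ∉ S) :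
    closedNbhd G v ∩ S = nbh G v ∩ S := by
  rw [closedNbhd_eq, Finset.insert_inter_of_notMem h]

lemma univ_GDA : GlobalDefensiveAlliance G (Finset.univ : Finset V) := by
  refine ⟨fun v hv => absurd (Finset.mem_univ v) hv, fun v _ => ?_⟩
  have h : closedNbhd G v \ Finset.univ = ∅ :=
    Finset.sdiff_eq_empty_iff_subset.2 (Finset.subset_univ _)
  simp [h]

lemma univ_GOA : GlobalOffensiveAlliance G (Finset.univ : Finset V) :=
  ⟨fun v hv => absurd (Finset.mem_univ v) hv,
   fun v hv _ => absurd (Finset.mem_univ v) hv⟩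

lemma gammaO_le_card : gammaO G ≤ Fintype.card V :=
  Nat.sInf_le ⟨Finset.univ, univ_GOA, Finset.card_univ⟩

lemma one_le_gammaA [Nonempty V] : 1 ≤ gammaA G := by
  have hne : {k | ∃ S : Finset V, GlobalDefensiveAlliance G S ∧ S.card = k}.Nonempty :=
    ⟨_, Finset.univ, univ_GDA, rfl⟩
  obtain ⟨S, hS, hcard⟩ := Nat.sInf_mem hne
  rw [gammaA]
  by_contra h
  have h0 : S.card = 0 := by omega
  rw [Finset.card_eq_zero] at h0
  subst h0
  obtain ⟨u, hu, _⟩ := hS.1 (Classical.arbitrary V) (Finset.notMem_empty _)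
  exact Finset.notMem_empty u hu

end Aux

section Part2
variable {V : Type*} [Fintype V] {G : SimpleGraph V}

lemma tree_adj_dist_ne (hT : G.IsTree) (r : V) {u v : V} (h : G.Adj u v) :
    G.dist r u ≠ G.dist r v := by
  intro heq
  have hc := hT.isConnected
  obtain ⟨p, hp⟩ := hc.exists_walk_length_eq_dist r u
  obtain ⟨q, hq⟩ := hc.exists_walk_length_eq_dist r v
  have hpp : p.IsPath := p.isPath_of_length_eq_dist hp
  have hqp : q.IsPath := q.isPath_of_length_eq_dist hq
  by_cases hvp : v ∈ p.support
  · -- prefix of p up to v equals q; the rest is the single edge v-u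
    have ht : (p.takeUntil v hvp).IsPath := hpp.takeUntil hvp
    have hd : (p.dropUntil v hvp).IsPath := hpp.dropUntil hvp
    have htq : (⟨p.takeUntil v hvp, ht⟩ : G.Path r v) = ⟨q, hqp⟩ :=
      hT.IsAcyclic.path_unique _ _
    have hlen1 : (p.takeUntil v hvp).length = q.length :=
      congrArg (fun z : G.Path r v => (z : G.Walk r v).length) htq
    have hedge : (Walk.cons h.symm Walk.nil : G.Walk v u).IsPath := by
      rw [Walk.cons_isPath_iff]
      exact ⟨Walk.IsPath.nil, by simp [h.ne']⟩
    have hdq : (⟨p.dropUntil v hvp, hd⟩ : G.Path v u) = ⟨Walk.cons h.symm Walk.nil, hedge⟩ :=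
      hT.IsAcyclic.path_unique _ _
    have hlen2 : (p.dropUntil v hvp).length = 1 := by
      have := congrArg (fun z : G.Path v u => (z : G.Walk v u).length) hdq
      simpa using this
    have hsplit := congr_arg Walk.length (p.take_spec hvp)
    rw [Walk.length_append] at hsplit
    omega
  · -- extend p by the edge u-v: a path from r to v
    have hw : (Walk.cons h.symm p.reverse : G.Walk v r).IsPath := by
      rw [Walk.cons_isPath_iff]
      refine ⟨p.reverse.isPath_of_length_eq_dist ?_, ?_⟩
      · rw [Walk.length_reverse, G.dist_comm]; exact hp
      · rw [Walk.support_reverse, List.mem_reverse]; exact hvp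
    have hqq : (⟨Walk.cons h.symm p.reverse, hw⟩ : G.Path v r) = ⟨q.reverse, hqp.reverse⟩ :=
      hT.IsAcyclic.path_unique _ _
    have hlen : (Walk.cons h.symm p.reverse).length = q.reverse.length :=
      congrArg (fun z : G.Path v r => (z : G.Walk v r).length) hqq
    simp [Walk.length_reverse] at hlen
    omega

lemma exists_adj (hT : G.IsTree) (h2 : 2 ≤ Fintype.card V) (v : V) : ∃ u, G.Adj v u := by
  obtain ⟨u, hu⟩ := Fintype.exists_ne_of_one_lt_card (by omega) v
  obtain ⟨w⟩ := hT.isConnected v u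
  cases w with
  | nil => exact absurd rfl hu.symm
  | cons h _ => exact ⟨_, h⟩

lemma exists_small_GOA (hT : G.IsTree) (h2 : 2 ≤ Fintype.card V) :
    ∃ S : Finset V, GlobalOffensiveAlliance G S ∧ 2 * S.card ≤ Fintype.card V := by
  have hne : Nonempty V := Fintype.card_pos_iff.1 (by omega)
  obtain ⟨r⟩ := hne
  set col : V → ℕ := fun v => G.dist r v % 2 with hcol
  have hadj : ∀ {u v : V}, G.Adj u v → col u ≠ col v := by
    intro u v h hcuv
    have h1 := tree_adj_dist_ne hT r h
    have hle1 : G.dist r v ≤ G.dist r u + 1 := by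
      calc G.dist r v ≤ G.dist r u + G.dist u v := hT.isConnected.dist_triangle
        _ = G.dist r u + 1 := by rw [(G.dist_eq_one_iff_adj).2 h]
    have hle2 : G.dist r u ≤ G.dist r v + 1 := by
      calc G.dist r u ≤ G.dist r v + G.dist v u := hT.isConnected.dist_triangle
        _ = G.dist r v + 1 := by rw [(G.dist_eq_one_iff_adj).2 h.symm]
    simp only [hcol] at hcuv
    omega
  have claim : ∀ k : ℕ, k < 2 →
      GlobalOffensiveAlliance G (Finset.univ.filter (fun v => col v = k)) := by
    intro k hk
    set S := Finset.univ.filter (fun v => col v = k) with hSdef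
    have hmemS : ∀ {v : V}, v ∈ S ↔ col v = k := by intro v; simp [hSdef]
    have hdom : Dominating G S := by
      intro v hv
      obtain ⟨u, hu⟩ := exists_adj hT h2 v
      refine ⟨u, hmemS.2 ?_, hu⟩
      have h1 : col v ≠ k := fun hc => hv (hmemS.2 hc)
      have h2' : col u ≠ col v := (hadj hu.symm)
      have : col u < 2 := Nat.mod_lt _ (by norm_num)
      have : col v < 2 := Nat.mod_lt _ (by norm_num)
      omega
    refine ⟨hdom, fun v hv _ => ?_⟩
    have hcolv : col v ≠ k := fun hc => hv (hmemS.2 hc)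
    have hnbS : nbh G v ⊆ S := by
      intro x hx
      have hx' : G.Adj v x := mem_nbh.1 hx
      refine hmemS.2 ?_
      have h2' : col x ≠ col v := (hadj hx'.symm)
      have : col x < 2 := Nat.mod_lt _ (by norm_num)
      have : col v < 2 := Nat.mod_lt _ (by norm_num)
      omega
    rw [cn_diff_not_mem hv, cn_inter_not_mem hv]
    have hdiff : nbh G v \ S = ∅ := Finset.sdiff_eq_empty_iff_subset.2 hnbS
    have hinter : nbh G v ∩ S = nbh G v := Finset.inter_eq_left.2 hnbS
    rw [hdiff, hinter]
    simp only [Finset.card_empty, zero_add]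
    obtain ⟨u, hu⟩ := exists_adj hT h2 v
    exact Finset.card_pos.2 ⟨u, mem_nbh.2 hu⟩
  set A := Finset.univ.filter (fun v => col v = 0) with hA
  set B := Finset.univ.filter (fun v => col v = 1) with hB
  have hcards : A.card + B.card = Fintype.card V := by
    rw [hA, hB]
    have : (Finset.univ.filter (fun v => col v = 1)) =
        (Finset.univ.filter (fun v => ¬ col v = 0)) := by
      apply Finset.filter_congr
      intro v _
      have : col v < 2 := Nat.mod_lt _ (by norm_num)
      constructor <;> (intro h; omega)
    rw [this, Finset.card_filter_add_card_filter_not, Finset.card_univ]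
  rcases le_total A.card B.card with hle | hle
  · exact ⟨A, claim 0 (by norm_num), by omega⟩
  · exact ⟨B, claim 1 (by norm_num), by omega⟩

end Part2

section Part3
variable {V : Type*} [Fintype V] {G : SimpleGraph V}

lemma sum_degC_le (hT : G.IsTree) (S : Finset V) :
    ∑ v ∈ S, (nbh G v \ S).card ≤ Fintype.card V - 1 := by
  have h1 : ∑ v ∈ S, (nbh G v \ S).card = (S.sigma fun v => nbh G v \ S).card :=
    (Finset.card_sigma _ _).symm
  have h2 : (S.sigma fun v => nbh G v \ S).card ≤ G.edgeFinset.card := by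
    apply Finset.card_le_card_of_injOn (fun p => s(p.1, p.2))
    · intro p hp
      rw [Finset.mem_coe, Finset.mem_sigma] at hp
      have : G.Adj p.1 p.2 := mem_nbh.1 (Finset.mem_sdiff.1 hp.2).1
      rwa [Finset.mem_coe, mem_edgeFinset]
    · intro p hp q hq heq
      simp only [Finset.mem_coe, Finset.mem_sigma] at hp hq
      have hp1 : p.1 ∈ S := hp.1
      have hp2 : p.2 ∉ S := (Finset.mem_sdiff.1 hp.2).2
      have hq1 : q.1 ∈ S := hq.1
      have hq2 : q.2 ∉ S := (Finset.mem_sdiff.1 hq.2).2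
      simp only [Sym2.eq_iff] at heq
      obtain ⟨a, b⟩ := p; obtain ⟨c, d⟩ := q
      obtain ⟨h1, h2⟩ | ⟨h1, h2⟩ := heq
      · simp_all
      · subst h1; exact (hq2 hp1).elim
  have h3 := hT.card_edgeFinset
  omega

lemma gammaA_le_gammaO_add (hT : G.IsTree) :
    gammaA G ≤ gammaO G + (Fintype.card V - 1) / 2 := by
  have hne : {k | ∃ S : Finset V, GlobalOffensiveAlliance G S ∧ S.card = k}.Nonempty :=
    ⟨_, Finset.univ, univ_GOA, rfl⟩
  obtain ⟨S, hS, hScard⟩ := Nat.sInf_mem hne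
  set k : V → ℕ := fun v => ((nbh G v \ S).card - (nbh G v ∩ S).card) / 2 with hkdef
  have hkle : ∀ v : V, k v ≤ (nbh G v \ S).card := by
    intro v; simp only [hkdef]; omega
  have hex : ∀ v : V, ∃ X : Finset V, X ⊆ nbh G v \ S ∧ X.card = k v := by
    intro v
    obtain ⟨X, hX1, hX2⟩ := Finset.exists_subset_card_eq (hkle v)
    exact ⟨X, hX1, hX2⟩
  choose Xf hXsub hXcard using hex
  set X := S.biUnion Xf with hXdef
  set D := S ∪ X with hDdef
  have hSD : S ⊆ D := Finset.subset_union_left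
  have hGDA : GlobalDefensiveAlliance G D := by
    constructor
    · intro v hv
      have hvS : v ∉ S := fun h => hv (hSD h)
      obtain ⟨u, hu, hadj⟩ := hS.1 v hvS
      exact ⟨u, hSD hu, hadj⟩
    · intro v hvD
      by_cases hvS : v ∈ S
      · -- v ∈ S
        have hXfX : Xf v ⊆ X := Finset.subset_biUnion_of_mem Xf hvS
        have hsub1 : closedNbhd G v \ D ⊆ (nbh G v \ S) \ Xf v := by
          rw [cn_diff_mem hvD]
          intro x hx
          rw [Finset.mem_sdiff] at hx
          rw [Finset.mem_sdiff, Finset.mem_sdiff]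
          exact ⟨⟨hx.1, fun hxS => hx.2 (hSD hxS)⟩,
            fun hxX => hx.2 (Finset.mem_union_right _ (hXfX hxX))⟩
        have hc1 : (closedNbhd G v \ D).card ≤ (nbh G v \ S).card - k v := by
          calc (closedNbhd G v \ D).card ≤ ((nbh G v \ S) \ Xf v).card :=
                Finset.card_le_card hsub1
            _ = (nbh G v \ S).card - k v := by
                rw [Finset.card_sdiff_of_subset (hXsub v), hXcard v]
        have hsub2 : insert v ((nbh G v ∩ S) ∪ Xf v) ⊆ closedNbhd G v ∩ D := by
          intro x hx
          rcases Finset.mem_insert.1 hx with rfl | hx'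
          · exact Finset.mem_inter.2 ⟨Finset.mem_insert_self _ _, hvD⟩
          · rcases Finset.mem_union.1 hx' with hx'' | hx''
            · have := Finset.mem_inter.1 hx''
              exact Finset.mem_inter.2 ⟨Finset.mem_insert_of_mem this.1, hSD this.2⟩
            · have hxnb : x ∈ nbh G v \ S := hXsub v hx''
              exact Finset.mem_inter.2 ⟨Finset.mem_insert_of_mem (Finset.mem_sdiff.1 hxnb).1,
                Finset.mem_union_right _ (hXfX hx'')⟩
        have hdisj : Disjoint (nbh G v ∩ S) (Xf v) := by
          apply Finset.disjoint_left.2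
          intro x hx1 hx2
          exact (Finset.mem_sdiff.1 (hXsub v hx2)).2 (Finset.mem_inter.1 hx1).2
        have hvnotin : v ∉ (nbh G v ∩ S) ∪ Xf v := by
          intro hv
          rcases Finset.mem_union.1 hv with h' | h'
          · exact not_mem_nbh_self (Finset.mem_inter.1 h').1
          · exact not_mem_nbh_self (Finset.mem_sdiff.1 (hXsub v h')).1
        have hc2 : (nbh G v ∩ S).card + k v + 1 ≤ (closedNbhd G v ∩ D).card := by
          calc (nbh G v ∩ S).card + k v + 1
              = (insert v ((nbh G v ∩ S) ∪ Xf v)).card := by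
                rw [Finset.card_insert_of_notMem hvnotin,
                  Finset.card_union_of_disjoint hdisj, hXcard v]
            _ ≤ (closedNbhd G v ∩ D).card := Finset.card_le_card hsub2
        have hkv : k v = ((nbh G v \ S).card - (nbh G v ∩ S).card) / 2 := rfl
        omega
      · -- v ∈ X \ S
        have hvX : v ∈ X := (Finset.mem_union.1 hvD).resolve_left hvS
        obtain ⟨w, hwS, hvXf⟩ := Finset.mem_biUnion.1 hvX
        have hvnb : v ∈ nbh G w \ S := hXsub w hvXf
        have hadj : G.Adj w v := mem_nbh.1 (Finset.mem_sdiff.1 hvnb).1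
        have hoff := hS.2 v hvS ⟨w, hwS, hadj.symm⟩
        rw [cn_diff_not_mem hvS, cn_inter_not_mem hvS] at hoff
        have hm1 : (closedNbhd G v \ D).card ≤ (closedNbhd G v \ S).card :=
          Finset.card_le_card (Finset.sdiff_subset_sdiff (Finset.Subset.refl _) hSD)
        have hm2 : (closedNbhd G v ∩ S).card ≤ (closedNbhd G v ∩ D).card :=
          Finset.card_le_card (Finset.inter_subset_inter (Finset.Subset.refl _) hSD)
        rw [cn_diff_not_mem hvS] at hm1
        rw [cn_inter_not_mem hvS] at hm2
        omega
  -- cardinality bound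
  have hXcardle : X.card ≤ ∑ v ∈ S, k v := by
    calc X.card ≤ ∑ v ∈ S, (Xf v).card := Finset.card_biUnion_le
      _ = ∑ v ∈ S, k v := Finset.sum_congr rfl (fun v _ => hXcard v)
  have h2sum : 2 * ∑ v ∈ S, k v ≤ ∑ v ∈ S, (nbh G v \ S).card := by
    rw [Finset.mul_sum]
    apply Finset.sum_le_sum
    intro v _
    have hkv : k v = ((nbh G v \ S).card - (nbh G v ∩ S).card) / 2 := rfl
    omega
  have hsum := sum_degC_le hT S
  have hD : D.card ≤ S.card + X.card := Finset.card_union_le _ _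
  have hga : gammaA G ≤ D.card := Nat.sInf_le ⟨D, hGDA, rfl⟩
  have hgo : S.card = gammaO G := hScard
  omega

end Part3

/-- For any tree on n vertices, |γ_o(T) - γ_a(T)| ≤ n/2. -/
theorem stmt_14 {V : Type*} [Fintype V] (G : SimpleGraph V) (hT : G.IsTree) :
    |(gammaO G : ℝ) - (gammaA G : ℝ)| ≤ (Fintype.card V : ℝ) / 2 := by
  have hne : Nonempty V := hT.isConnected.nonempty
  have hn1 : 1 ≤ Fintype.card V := Fintype.card_pos
  have hA1 : 1 ≤ gammaA G := one_le_gammaA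
  have hAO : gammaA G ≤ gammaO G + (Fintype.card V - 1) / 2 := gammaA_le_gammaO_add hT
  rw [abs_sub_le_iff]
  constructor
  · rcases le_or_gt 2 (Fintype.card V) with h2 | h2
    · obtain ⟨S, hS, h2S⟩ := exists_small_GOA hT h2
      have ho : gammaO G ≤ S.card := Nat.sInf_le ⟨S, hS, rfl⟩
      have h2o : 2 * gammaO G ≤ Fintype.card V := by omega
      have hc := (Nat.cast_le (α := ℝ)).2 h2o
      push_cast at hc
      have ha : (0 : ℝ) ≤ (gammaA G : ℝ) := Nat.cast_nonneg _
      linarith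
    · have hn : Fintype.card V = 1 := by omega
      have ho : gammaO G ≤ 1 := hn ▸ gammaO_le_card
      have hc := (Nat.cast_le (α := ℝ)).2 ho
      have ha := (Nat.cast_le (α := ℝ)).2 hA1
      have hnn := (Nat.cast_le (α := ℝ)).2 hn1
      push_cast at hc ha hnn
      linarith
  · have h2m : 2 * ((Fintype.card V - 1) / 2) ≤ Fintype.card V := by omega
    have hc1 := (Nat.cast_le (α := ℝ)).2 hAO
    have hc2 := (Nat.cast_le (α := ℝ)).2 h2m
    push_cast at hc1 hc2
    have ho : (0 : ℝ) ≤ (gammaO G : ℝ) := Nat.cast_nonneg _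
    linarith
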